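/- Under the main setting, every point of the pole set S lies in the closed left half-plane: if s ∈ S then Re(s) ≤ 0, with Re(s) = 0 occurring exactly for the tuples with k_1 = ⋯ = k_{r−1} = 0 (giving the points s = 2πin/log α_1, n ∈ ℤ). -/

import Mathlib

open Polynomial Real

/-- For `Q ∈ ℤ[X]`, `Q(∇)a(n) = ∑_j (coeff of X^j in Q) · a(n+j)`; this predicate says that
`Q(∇)a(n) = 0` for all `n ≥ 1`, i.e. `Q` annihilates the sequence `a`. -/
def Annihilates (Q : Polynomial ℤ) (a : ℕ → ℤ) : Prop :=
  ∀ n : ℕ, 1 ≤ n → (Q.sum fun j c => c * a (n + j)) = 0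

/-- Under the main setting, each point of the pole set has real part `≤ 0`, with real part `= 0`
occurring exactly for the tuples with `k₁ = ⋯ = k_{r-1} = 0`, which give the points
`s = 2πin/log α₁`, `n ∈ ℤ`. -/
theorem poles_in_left_half_plane
    (a : ℕ → ℤ) (r : ℕ) (hr : 1 ≤ r)
    (P : Polynomial ℤ) (hmonic : P.Monic)
    (hmin : ∀ Q : Polynomial ℤ, Annihilates Q a ↔ P ∣ Q)
    (hirr : Irreducible (P.map (Int.castRingHom ℚ)))
    (hdeg : P.natDegree = r)
    (α : ℕ → ℂ)
    (hroot : ∀ i, i < r → (Polynomial.aeval (α i)) P = 0)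
    (hinj : Set.InjOn α (Set.Iio r))
    (α₁ : ℝ) (hα₁ : α 0 = (α₁ : ℂ)) (hα₁gt : 1 < α₁)
    (hdom : ∀ i, 1 ≤ i → i < r → ‖α i‖ < α₁) :
    ∀ s : ℂ, ∀ k : ℕ → ℕ,
      (∀ i, k (i + 1) ≤ k i) → (∀ i, r - 1 ≤ i → k i = 0) →
      Complex.exp ((s + (k 0 : ℂ)) * (Real.log α₁ : ℂ)) =
        ∏ i ∈ Finset.range (r - 1), α (i + 1) ^ (k i - k (i + 1)) →
      s.re ≤ 0 ∧ (s.re = 0 ↔ ∀ i, k i = 0) ∧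
        (s.re = 0 → ∃ n : ℤ, s = 2 * (π : ℂ) * Complex.I * (n : ℂ) / (Real.log α₁ : ℂ)) := by
  intro s k hmono hzero heq
  have hL : 0 < Real.log α₁ := Real.log_pos hα₁gt
  have hα₁pos : 0 < α₁ := lt_trans one_pos hα₁gt
  -- telescoping sum
  have key : ∀ m, (∑ i ∈ Finset.range m, (k i - k (i + 1))) + k m = k 0 := by
    intro m
    induction m with
    | zero => simp
    | succ m ih =>
      rw [Finset.sum_range_succ]
      have := hmono m
      omega
  have hsum : (∑ i ∈ Finset.range (r - 1), (k i - k (i + 1))) = k 0 := by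
    have h1 := key (r - 1)
    have h0 := hzero (r - 1) le_rfl
    omega
  have hre : ((s + (k 0 : ℂ)) * ((Real.log α₁ : ℝ) : ℂ)).re
      = (s.re + k 0) * Real.log α₁ := by
    simp [Complex.add_re, Complex.mul_re]
  have habs : Real.exp ((s.re + k 0) * Real.log α₁)
      = ∏ i ∈ Finset.range (r - 1), ‖α (i + 1)‖ ^ (k i - k (i + 1)) := by
    have h := congrArg (‖·‖) heq
    rw [Complex.norm_exp, hre, norm_prod] at h
    simpa using h
  have hprodpos : 0 < ∏ i ∈ Finset.range (r - 1),
      ‖α (i + 1)‖ ^ (k i - k (i + 1)) := habs ▸ Real.exp_pos _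
  have hfacpos : ∀ i ∈ Finset.range (r - 1),
      0 < ‖α (i + 1)‖ ^ (k i - k (i + 1)) := by
    intro i hi
    rcases lt_or_eq_of_le (pow_nonneg (norm_nonneg (α (i + 1))) (k i - k (i + 1))) with h | h
    · exact h
    · exfalso
      have hz : (∏ i ∈ Finset.range (r - 1),
          ‖α (i + 1)‖ ^ (k i - k (i + 1))) = 0 :=
        Finset.prod_eq_zero hi h.symm
      rw [hz] at hprodpos
      exact lt_irrefl _ hprodpos
  have hle : ∀ i ∈ Finset.range (r - 1),
      ‖α (i + 1)‖ ^ (k i - k (i + 1)) ≤ α₁ ^ (k i - k (i + 1)) := by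
    intro i hi
    rw [Finset.mem_range] at hi
    exact pow_le_pow_left₀ (norm_nonneg _)
      (le_of_lt (hdom (i + 1) (Nat.le_add_left 1 i) (by omega))) _
  have hrhs : (∏ i ∈ Finset.range (r - 1), α₁ ^ (k i - k (i + 1))) = α₁ ^ k 0 := by
    rw [Finset.prod_pow_eq_pow_sum, hsum]
  have hpow : α₁ ^ k 0 = Real.exp ((k 0 : ℝ) * Real.log α₁) := by
    rw [Real.exp_nat_mul, Real.exp_log hα₁pos]
  by_cases hall : ∀ i, k i = 0
  · -- all k vanish
    have hk0 : k 0 = 0 := hall 0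
    have hprod1 : (∏ i ∈ Finset.range (r - 1),
        ‖α (i + 1)‖ ^ (k i - k (i + 1))) = 1 := by
      apply Finset.prod_eq_one
      intro i _
      simp [hall]
    have hsre : s.re = 0 := by
      have h1 : Real.exp ((s.re + 0) * Real.log α₁) = 1 := by
        rw [← Nat.cast_zero, ← hk0]; rw [habs, hprod1]
      have h2 : (s.re + 0) * Real.log α₁ = 0 := by
        rwa [Real.exp_eq_one_iff] at h1
      have := mul_eq_zero.mp h2
      rcases this with h | h
      · linarith
      · exact absurd h (ne_of_gt hL)
    refine ⟨le_of_eq hsre, ⟨fun _ => hall, fun _ => hsre⟩, ?_⟩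
    intro _
    have hC1 : (∏ i ∈ Finset.range (r - 1), α (i + 1) ^ (k i - k (i + 1))) = 1 := by
      apply Finset.prod_eq_one
      intro i _
      simp [hall]
    rw [hC1] at heq
    rw [Complex.exp_eq_one_iff] at heq
    obtain ⟨n, hn⟩ := heq
    refine ⟨n, ?_⟩
    have hLne : ((Real.log α₁ : ℝ) : ℂ) ≠ 0 := by
      exact_mod_cast Complex.ofReal_ne_zero.mpr (ne_of_gt hL)
    field_simp
    rw [hk0] at hn
    push_cast at hn
    linear_combination hn
  · -- some k is nonzero
    push_neg at hall
    obtain ⟨i0, hi0⟩ := hall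
    have hanti : ∀ i, k i ≤ k 0 := by
      intro i
      induction i with
      | zero => exact le_rfl
      | succ i ih => exact le_trans (hmono i) ih
    have hk0 : k 0 ≠ 0 := fun h => hi0 (Nat.le_zero.mp ((h ▸ hanti i0)))
    obtain ⟨j, hj, hjne⟩ := Finset.exists_ne_zero_of_sum_ne_zero (hsum ▸ hk0)
    have hstrict : (∏ i ∈ Finset.range (r - 1),
          ‖α (i + 1)‖ ^ (k i - k (i + 1)))
        < ∏ i ∈ Finset.range (r - 1), α₁ ^ (k i - k (i + 1)) := by
      apply Finset.prod_lt_prod hfacpos hle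
      refine ⟨j, hj, ?_⟩
      rw [Finset.mem_range] at hj
      exact pow_lt_pow_left₀ (hdom (j + 1) (Nat.le_add_left 1 j) (by omega))
        (norm_nonneg _) hjne
    have hlt : Real.exp ((s.re + k 0) * Real.log α₁)
        < Real.exp ((k 0 : ℝ) * Real.log α₁) := by
      rw [habs, ← hpow, ← hrhs]; exact hstrict
    have hneg : s.re < 0 := by
      have := Real.exp_lt_exp.mp hlt
      nlinarith
    refine ⟨le_of_lt hneg, ⟨fun h => absurd h (ne_of_lt hneg), fun h => absurd (h i0) hi0⟩,
      fun h => absurd h (ne_of_lt hneg)⟩
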